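/- Let P and V be subsets of the Euclidean space ℝ^d, let a, a', r, ε_p, ε_v, d_eff > 0 be real numbers, and let K_p, K_v be positive reals with K = K_p + K_v. Suppose: (i) a·ε_p^{−d_eff} ≤ K_p and a'·ε_v^{−d_eff} ≤ K_v; (ii) every finite r-cover of P has cardinality at least n_P and every finite r-cover of V has cardinality at least n_V, S_p is a finite ε_p-cover of P of cardinality K_p, S_v is a finite ε_v-cover of V of cardinality K_v, and K_p + K_v < n_P + n_V. Then max{ε_p, ε_v} ≥ max{ r, (4·a·a')^{1/(2·d_eff)} · K^{−1/d_eff} }. -/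

import Mathlib

open Metric

/-- Trade-off between prompt alignment and visual preservation: the larger of
the two covering radii is bounded below by
`max{ r, (4·a·a')^{1/(2·d_eff)} · K^{-1/d_eff} }`. -/
theorem tradeoff_lower_bound
    {d : ℕ} (P V : Set (EuclideanSpace ℝ (Fin d)))
    (a a' r εp εv d_eff Kp Kv : ℝ) (nP nV : ℕ)
    (ha : 0 < a) (ha' : 0 < a') (hr : 0 < r)
    (hεp : 0 < εp) (hεv : 0 < εv) (hd : 0 < d_eff)
    (hKp : 0 < Kp) (hKv : 0 < Kv)
    (h1 : a * εp ^ (-d_eff) ≤ Kp) (h2 : a' * εv ^ (-d_eff) ≤ Kv)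
    (hnP : ∀ C : Finset (EuclideanSpace ℝ (Fin d)),
      P ⊆ (⋃ c ∈ C, closedBall c r) → nP ≤ C.card)
    (hnV : ∀ C : Finset (EuclideanSpace ℝ (Fin d)),
      V ⊆ (⋃ c ∈ C, closedBall c r) → nV ≤ C.card)
    (Sp Sv : Finset (EuclideanSpace ℝ (Fin d)))
    (hSp : P ⊆ ⋃ c ∈ Sp, closedBall c εp) (hSpcard : (Sp.card : ℝ) = Kp)
    (hSv : V ⊆ ⋃ c ∈ Sv, closedBall c εv) (hSvcard : (Sv.card : ℝ) = Kv)
    (hK : Kp + Kv < (nP : ℝ) + (nV : ℝ)) :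
    max r ((4 * a * a') ^ (1 / (2 * d_eff)) * (Kp + Kv) ^ (-(1 / d_eff))) ≤
      max εp εv := by
  have hm : (0:ℝ) < max εp εv := lt_max_of_lt_left hεp
  have hKsum : (0:ℝ) < Kp + Kv := by linarith
  apply max_le
  · -- r ≤ max εp εv
    by_contra h
    push_neg at h
    have h1' : εp ≤ r := le_of_lt (lt_of_le_of_lt (le_max_left _ _) h)
    have h2' : εv ≤ r := le_of_lt (lt_of_le_of_lt (le_max_right _ _) h)
    have hP : P ⊆ ⋃ c ∈ Sp, closedBall c r :=
      hSp.trans (Set.iUnion₂_mono fun c _ => closedBall_subset_closedBall h1')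
    have hV : V ⊆ ⋃ c ∈ Sv, closedBall c r :=
      hSv.trans (Set.iUnion₂_mono fun c _ => closedBall_subset_closedBall h2')
    have hle : (nP:ℝ) + nV ≤ Kp + Kv := by
      rw [← hSpcard, ← hSvcard]
      exact_mod_cast add_le_add (hnP Sp hP) (hnV Sv hV)
    linarith
  · set m := max εp εv with hmdef
    have hmpos : (0:ℝ) < m := hm
    have hEp : a ≤ Kp * m ^ d_eff := by
      have hp : a = a * εp ^ (-d_eff) * εp ^ d_eff := by
        rw [mul_assoc, ← Real.rpow_add hεp]; simp
      calc a = a * εp ^ (-d_eff) * εp ^ d_eff := hp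
        _ ≤ Kp * m ^ d_eff :=
          mul_le_mul h1 (Real.rpow_le_rpow hεp.le (le_max_left _ _) hd.le)
            (Real.rpow_nonneg hεp.le _) hKp.le
    have hEv : a' ≤ Kv * m ^ d_eff := by
      have hp : a' = a' * εv ^ (-d_eff) * εv ^ d_eff := by
        rw [mul_assoc, ← Real.rpow_add hεv]; simp
      calc a' = a' * εv ^ (-d_eff) * εv ^ d_eff := hp
        _ ≤ Kv * m ^ d_eff :=
          mul_le_mul h2 (Real.rpow_le_rpow hεv.le (le_max_right _ _) hd.le)
            (Real.rpow_nonneg hεv.le _) hKv.le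
    have hmd : (0:ℝ) < m ^ d_eff := Real.rpow_pos_of_pos hmpos _
    have hkey : 4 * a * a' ≤ (Kp + Kv) ^ (2:ℕ) * m ^ (2 * d_eff) := by
      have hsq : m ^ (2 * d_eff) = m ^ d_eff * m ^ d_eff := by
        rw [← Real.rpow_add hmpos]; ring_nf
      rw [hsq]
      nlinarith [sq_nonneg (Kp - Kv), mul_le_mul hEp hEv ha'.le (by positivity : (0:ℝ) ≤ Kp * m ^ d_eff)]
    have h4pos : (0:ℝ) < 4 * a * a' := by positivity
    have hexp : (0:ℝ) < 1 / (2 * d_eff) := by positivity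
    have hstep : (4 * a * a') ^ (1 / (2 * d_eff)) ≤ (Kp + Kv) ^ (1 / d_eff) * m := by
      have := Real.rpow_le_rpow h4pos.le hkey hexp.le
      calc (4 * a * a') ^ (1 / (2 * d_eff))
          ≤ ((Kp + Kv) ^ (2:ℕ) * m ^ (2 * d_eff)) ^ (1 / (2 * d_eff)) := this
        _ = (Kp + Kv) ^ (1 / d_eff) * m := by
            rw [Real.mul_rpow (by positivity) (by positivity),
              ← Real.rpow_natCast (Kp + Kv) 2, ← Real.rpow_mul hKsum.le,
              ← Real.rpow_mul hmpos.le]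
            have e1 : ((2:ℕ):ℝ) * (1 / (2 * d_eff)) = 1 / d_eff := by
              field_simp
              norm_num
            have e2 : 2 * d_eff * (1 / (2 * d_eff)) = 1 := by
              field_simp
            rw [e1, e2, Real.rpow_one]
    have hKpow : (0:ℝ) < (Kp + Kv) ^ (1 / d_eff) := Real.rpow_pos_of_pos hKsum _
    rw [Real.rpow_neg hKsum.le, mul_inv_le_iff₀ hKpow]
    linarith [hstep, mul_comm m ((Kp + Kv) ^ (1 / d_eff))]
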